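/- Let g : ℝ → ℝ be twice continuously differentiable with g, g', g'' ∈ L²(ℝ), and with g(x) → 0 and g'(x) → 0 as |x| → ∞. Then sup_{x∈ℝ} |g(x)| ≤ √2 · ‖g‖_{L²}^{3/4} · ‖g''‖_{L²}^{1/4}. -/

import Mathlib

open MeasureTheory Filter Set intervalIntegral

/-- The `L²(ℝ)` norm `(∫ℝ |g(x)|² dx)^(1/2)`. -/
noncomputable def L2Norm (g : ℝ → ℝ) : ℝ := (∫ x : ℝ, (g x) ^ 2) ^ ((1 : ℝ) / 2)

/-- `g ∈ L²(ℝ)`, i.e. `∫ℝ |g(x)|² dx < ∞`. -/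
def MemL2 (g : ℝ → ℝ) : Prop := MeasureTheory.Integrable fun x => (g x) ^ 2

lemma my_CS (f h : ℝ → ℝ) (hfc : Continuous f) (hhc : Continuous h)
    (hf2 : Integrable (fun x => f x ^ 2)) (hh2 : Integrable (fun x => h x ^ 2)) :
    ∫ x : ℝ, |f x * h x| ≤ (∫ x : ℝ, f x ^ 2) ^ ((1:ℝ)/2) * (∫ x : ℝ, h x ^ 2) ^ ((1:ℝ)/2) := by
  have hconj : Real.HolderConjugate 2 2 := ⟨by norm_num, by norm_num, by norm_num⟩
  have h2 : (ENNReal.ofReal 2) = 2 := by norm_num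
  have mem1 : MemLp (fun x => |f x|) (ENNReal.ofReal 2) volume := by
    rw [h2]
    exact (memLp_two_iff_integrable_sq hfc.abs.aestronglyMeasurable).mpr (by simpa [sq_abs])
  have mem2 : MemLp (fun x => |h x|) (ENNReal.ofReal 2) volume := by
    rw [h2]
    exact (memLp_two_iff_integrable_sq hhc.abs.aestronglyMeasurable).mpr (by simpa [sq_abs])
  have := integral_mul_le_Lp_mul_Lq_of_nonneg hconj
    (ae_of_all _ fun x => abs_nonneg (f x)) (ae_of_all _ fun x => abs_nonneg (h x)) mem1 mem2
  have e1 : ∀ x : ℝ, |f x| ^ (2:ℝ) = f x ^ 2 := fun x => by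
    rw [show (2:ℝ) = ((2:ℕ):ℝ) by norm_num, Real.rpow_natCast, sq_abs]
  have e2 : ∀ x : ℝ, |h x| ^ (2:ℝ) = h x ^ 2 := fun x => by
    rw [show (2:ℝ) = ((2:ℕ):ℝ) by norm_num, Real.rpow_natCast, sq_abs]
  simpa [abs_mul, e1, e2] using this

/-- If `g ∈ C²` with `g, g', g'' ∈ L²(ℝ)` and `g(x), g'(x) → 0` as
`|x| → ∞`, then `sup_x |g(x)| ≤ √2 ‖g‖^{3/4} ‖g''‖^{1/4}`. -/
theorem sobolev_sup_bound_second
    (g : ℝ → ℝ) (hg : ContDiff ℝ 2 g)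
    (hL2 : MemL2 g) (hL2' : MemL2 (deriv g)) (hL2'' : MemL2 (iteratedDeriv 2 g))
    (hdecay : Tendsto g (cocompact ℝ) (nhds 0))
    (hdecay' : Tendsto (deriv g) (cocompact ℝ) (nhds 0)) :
    ∀ x : ℝ,
      |g x| ≤ Real.sqrt 2 * L2Norm g ^ ((3:ℝ)/4) * L2Norm (iteratedDeriv 2 g) ^ ((1:ℝ)/4) := by

  intro x
  -- differentiability facts
  have hgd : Differentiable ℝ g := hg.differentiable (by norm_num)
  have hg1 : ContDiff ℝ 1 (deriv g) :=
    (contDiff_succ_iff_deriv.mp (show ContDiff ℝ (1+1) g by exact_mod_cast hg)).2.2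
  have hg'd : Differentiable ℝ (deriv g) := hg1.differentiable (by norm_num)
  have hiter : iteratedDeriv 2 g = deriv (deriv g) := by
    rw [iteratedDeriv_succ, iteratedDeriv_one]
  have hcg : Continuous g := hgd.continuous
  have hcg' : Continuous (deriv g) := hg'd.continuous
  have hcg'' : Continuous (deriv (deriv g)) :=
    ((contDiff_succ_iff_deriv.mp (show ContDiff ℝ (0+1) (deriv g) by exact_mod_cast hg1)).2.2).continuous
  have hL2'' : Integrable (fun x => (deriv (deriv g) x) ^ 2) := by
    simpa [MemL2, hiter] using hL2''
  -- integrability of products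
  have igg' : Integrable (fun t => g t * deriv g t) := by
    refine (hL2.add hL2').mono' ((hcg.mul hcg').aestronglyMeasurable) (ae_of_all _ fun t => ?_)
    simp only [Real.norm_eq_abs, Pi.add_apply]
    nlinarith [sq_nonneg (|g t| - |deriv g t|), abs_mul (g t) (deriv g t), sq_abs (g t), sq_abs (deriv g t), abs_nonneg (g t), abs_nonneg (deriv g t)]
  have igg'' : Integrable (fun t => g t * deriv (deriv g) t) := by
    refine (hL2.add hL2'').mono' ((hcg.mul hcg'').aestronglyMeasurable) (ae_of_all _ fun t => ?_)
    simp only [Real.norm_eq_abs, Pi.add_apply]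
    nlinarith [sq_nonneg (|g t| - |deriv (deriv g) t|), abs_mul (g t) (deriv (deriv g) t), sq_abs (g t), sq_abs (deriv (deriv g) t), abs_nonneg (g t), abs_nonneg (deriv (deriv g) t)]
  -- limits at infinity
  have hcc : cocompact ℝ = atBot ⊔ atTop := cocompact_eq_atBot_atTop
  have htop : Tendsto g atTop (nhds 0) := hdecay.mono_left (by rw [hcc]; exact le_sup_right)
  have hbot : Tendsto (fun t => g t * deriv g t) atBot (nhds 0) := by
    have h1 : Tendsto g atBot (nhds 0) := hdecay.mono_left (by rw [hcc]; exact le_sup_left)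
    have h2 : Tendsto (deriv g) atBot (nhds 0) := hdecay'.mono_left (by rw [hcc]; exact le_sup_left)
    simpa using h1.mul h2
  have htop2 : Tendsto (fun t => g t * deriv g t) atTop (nhds 0) := by
    have h2 : Tendsto (deriv g) atTop (nhds 0) := hdecay'.mono_left (by rw [hcc]; exact le_sup_right)
    simpa using htop.mul h2
  set a := ∫ t : ℝ, g t ^ 2 with ha_def
  set b := ∫ t : ℝ, (deriv g t) ^ 2 with hb_def
  set c := ∫ t : ℝ, (deriv (deriv g) t) ^ 2 with hc_def
  have ha0 : 0 ≤ a := integral_nonneg fun t => sq_nonneg _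
  have hb0 : 0 ≤ b := integral_nonneg fun t => sq_nonneg _
  have hc0 : 0 ≤ c := integral_nonneg fun t => sq_nonneg _
  -- Step A : g x ^ 2 ≤ 2 * a^(1/2) * b^(1/2)
  have stepA : g x ^ 2 ≤ 2 * (a ^ ((1:ℝ)/2) * b ^ ((1:ℝ)/2)) := by
    have hderiv : ∀ t ∈ Ici x, HasDerivAt (fun t => g t ^ 2) (2 * g t * deriv g t) t := by
      intro t _
      have := (hgd t).hasDerivAt.fun_pow 2
      simpa [mul_comm, pow_one] using this
    have hint : IntegrableOn (fun t => 2 * g t * deriv g t) (Ioi x) := by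
      have : Integrable (fun t => 2 * (g t * deriv g t)) := igg'.const_mul 2
      exact (this.congr (ae_of_all _ fun t => by ring_nf)).integrableOn
    have htends : Tendsto (fun t => g t ^ 2) atTop (nhds 0) := by
      simpa using htop.pow 2
    have key := integral_Ioi_of_hasDerivAt_of_tendsto' hderiv hint htends
    -- g x ^ 2 = - ∫ Ioi x
    have h1 : g x ^ 2 = - ∫ t in Ioi x, 2 * g t * deriv g t := by
      rw [key]; ring
    have h2 : - (∫ t in Ioi x, 2 * g t * deriv g t) ≤ ∫ t in Ioi x, |2 * g t * deriv g t| := by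
      have hn := norm_integral_le_integral_norm (μ := volume.restrict (Ioi x)) (fun t => 2 * g t * deriv g t)
      simp only [Real.norm_eq_abs] at hn
      exact (neg_le_abs _).trans hn
    have h3 : (∫ t in Ioi x, |2 * g t * deriv g t|) ≤ ∫ t : ℝ, |2 * g t * deriv g t| := by
      refine setIntegral_le_integral ?_ (ae_of_all _ fun t => abs_nonneg _)
      exact ((igg'.const_mul 2).congr (ae_of_all _ fun t => by ring_nf)).abs
    have h4 : (∫ t : ℝ, |2 * g t * deriv g t|) = 2 * ∫ t : ℝ, |g t * deriv g t| := by
      rw [← MeasureTheory.integral_const_mul]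
      congr 1; ext t; rw [mul_assoc, abs_mul]; norm_num
    have h5 := my_CS g (deriv g) hcg hcg' hL2 hL2'
    calc g x ^ 2 = - ∫ t in Ioi x, 2 * g t * deriv g t := h1
      _ ≤ ∫ t in Ioi x, |2 * g t * deriv g t| := h2
      _ ≤ ∫ t : ℝ, |2 * g t * deriv g t| := h3
      _ = 2 * ∫ t : ℝ, |g t * deriv g t| := h4
      _ ≤ 2 * (a ^ ((1:ℝ)/2) * b ^ ((1:ℝ)/2)) := by linarith
  -- Step B : b ≤ a^(1/2) * c^(1/2)
  have stepB : b ≤ a ^ ((1:ℝ)/2) * c ^ ((1:ℝ)/2) := by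
    have hderiv : ∀ t : ℝ, HasDerivAt (fun t => g t * deriv g t)
        ((deriv g t) ^ 2 + g t * deriv (deriv g) t) t := by
      intro t
      have := ((hgd t).hasDerivAt).fun_mul ((hg'd t).hasDerivAt)
      rw [sq]; exact this
    have hint : Integrable (fun t => (deriv g t) ^ 2 + g t * deriv (deriv g) t) :=
      hL2'.add igg''
    have key := integral_of_hasDerivAt_of_tendsto hderiv hint hbot htop2
    rw [integral_add hL2' igg''] at key
    have h5 := my_CS g (deriv (deriv g)) hcg hcg'' hL2 hL2''
    have h6 : - (∫ t : ℝ, g t * deriv (deriv g) t) ≤ ∫ t : ℝ, |g t * deriv (deriv g) t| := by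
      have hn := norm_integral_le_integral_norm (μ := (volume : Measure ℝ)) (fun t => g t * deriv (deriv g) t)
      simp only [Real.norm_eq_abs] at hn
      exact (neg_le_abs _).trans hn
    have hb_eq : b = - ∫ t : ℝ, g t * deriv (deriv g) t := by
      have : b + ∫ t : ℝ, g t * deriv (deriv g) t = 0 := by simpa using key
      linarith
    rw [hb_eq]
    exact h6.trans h5
  -- final algebra
  have hA : L2Norm g = a ^ ((1:ℝ)/2) := rfl
  have hC : L2Norm (iteratedDeriv 2 g) = c ^ ((1:ℝ)/2) := by
    rw [L2Norm, hiter]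
  set A := a ^ ((1:ℝ)/2) with hAdef
  set C := c ^ ((1:ℝ)/2) with hCdef
  have hA0 : 0 ≤ A := Real.rpow_nonneg ha0 _
  have hC0 : 0 ≤ C := Real.rpow_nonneg hc0 _
  have hb' : b ^ ((1:ℝ)/2) ≤ (A * C) ^ ((1:ℝ)/2) :=
    Real.rpow_le_rpow hb0 stepB (by norm_num)
  have hchain : g x ^ 2 ≤ 2 * (A * (A * C) ^ ((1:ℝ)/2)) := by
    have := mul_le_mul_of_nonneg_left hb' hA0
    nlinarith [stepA]
  have hsplit : (A * C) ^ ((1:ℝ)/2) = A ^ ((1:ℝ)/2) * C ^ ((1:ℝ)/2) :=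
    Real.mul_rpow hA0 hC0
  have hRHS0 : 0 ≤ Real.sqrt 2 * A ^ ((3:ℝ)/4) * C ^ ((1:ℝ)/4) := by
    positivity
  have hsq : (Real.sqrt 2 * A ^ ((3:ℝ)/4) * C ^ ((1:ℝ)/4)) ^ 2
      = 2 * (A * (A * C) ^ ((1:ℝ)/2)) := by
    rw [mul_pow, mul_pow, Real.sq_sqrt (by norm_num : (0:ℝ) ≤ 2), hsplit,
      ← Real.rpow_natCast (A ^ ((3:ℝ)/4)) 2, ← Real.rpow_natCast (C ^ ((1:ℝ)/4)) 2,
      ← Real.rpow_mul hA0, ← Real.rpow_mul hC0]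
    have e1 : A ^ ((3:ℝ)/4 * (2:ℕ)) = A * A ^ ((1:ℝ)/2) := by
      rw [show ((3:ℝ)/4 * (2:ℕ)) = 1 + (1:ℝ)/2 by push_cast; ring,
        Real.rpow_add' hA0 (by norm_num), Real.rpow_one]
    have e2 : C ^ ((1:ℝ)/4 * (2:ℕ)) = C ^ ((1:ℝ)/2) := by norm_num
    rw [e1, e2]; ring

  have : |g x| = Real.sqrt (g x ^ 2) := (Real.sqrt_sq_eq_abs _).symm
  rw [this, hA, hC]
  calc Real.sqrt (g x ^ 2) ≤ Real.sqrt ((Real.sqrt 2 * A ^ ((3:ℝ)/4) * C ^ ((1:ℝ)/4)) ^ 2) := by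
        apply Real.sqrt_le_sqrt; rw [hsq]; exact hchain
    _ = Real.sqrt 2 * A ^ ((3:ℝ)/4) * C ^ ((1:ℝ)/4) := by
        rw [Real.sqrt_sq hRHS0]
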